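/- (Weighted trilinear estimate.) Let s ∈ (1/2,1] and σ ∈ (1/s,2). There exists a constant C > 0 depending only on s and σ such that for every c ≥ 0 and every f : ℤ² → ℂ with f(0) = 0 and X_{σ+1} < ∞, one has |∑_{j,k ∈ ℤ², j ≠ 0, k ≠ 0, j+k ≠ 0} e^{c(|j+k|^s − |j|^s − |k|^s)} ((j^⊥·k)/|j|) f(j) f(k) |j+k|^{2σs} \overline{f(j+k)}| ≤ C · X_σ · X_{σ+1}², where for ρ > 0 we set X_ρ := (∑_{k ∈ ℤ², k ≠ 0} |k|^{2ρs} |f(k)|²)^{1/2}. (Here | · | is the Euclidean norm on ℤ² ⊂ ℝ² and j^⊥ = (−j₂, j₁).) This is the Fourier-side form of |⟨e^{φA^{1/2}}B(w,w), e^{φA^{1/2}}A^σ w⟩_{L²}| ≲ ‖e^{φA^{1/2}}w‖_{Ḣ^{σs}} ‖e^{φA^{1/2}}w‖²_{Ḣ^{(σ+1)s}} with A = |∇|^{2s}, f(k) = e^{φ|k|^s} ŵ(k) and c = φ − νW_t ≥ 0. -/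

import Mathlib

open scoped ENNReal NNReal
open MeasureTheory

noncomputable section

/-- Euclidean norm of a lattice point `k ∈ ℤ² ⊆ ℝ²`. -/
def znorm (k : ℤ × ℤ) : ℝ := Real.sqrt ((k.1 : ℝ) ^ 2 + (k.2 : ℝ) ^ 2)

/-- `j^⊥ · k` where `j^⊥ = (−j₂, j₁)`. -/
def perpDot (j k : ℤ × ℤ) : ℝ := (-(j.2 : ℝ)) * (k.1 : ℝ) + (j.1 : ℝ) * (k.2 : ℝ)

/-- Gevrey norm `‖a‖_{ρ,φ} = (∑_{k≠0} |k|^{2ρ} e^{2φ|k|^s} |a k|²)^{1/2}`, valued in `ℝ≥0∞`. -/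
def gnorm (s ρ φ : ℝ) (a : ℤ × ℤ → ℂ) : ℝ≥0∞ :=
  (∑' k : ℤ × ℤ, if k = 0 then 0 else
    ENNReal.ofReal (znorm k ^ (2 * ρ) * Real.exp (2 * φ * znorm k ^ s) * ‖a k‖ ^ 2)) ^ (1/2 : ℝ)

section aux

lemma znorm_nonneg (k : ℤ × ℤ) : 0 ≤ znorm k := Real.sqrt_nonneg _

lemma one_le_znorm {k : ℤ × ℤ} (hk : k ≠ 0) : 1 ≤ znorm k := by
  have h : (1:ℝ) ≤ (k.1:ℝ)^2 + (k.2:ℝ)^2 := by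
    have h1 : k.1 ≠ 0 ∨ k.2 ≠ 0 := by
      by_contra h; push_neg at h; exact hk (Prod.ext h.1 h.2)
    rcases h1 with h1 | h1
    · have : (1:ℝ) ≤ |(k.1:ℝ)| := by
        exact_mod_cast Int.one_le_abs (by exact_mod_cast h1)
      nlinarith [sq_nonneg ((k.2:ℝ)), sq_abs ((k.1:ℝ))]
    · have : (1:ℝ) ≤ |(k.2:ℝ)| := by
        exact_mod_cast Int.one_le_abs (by exact_mod_cast h1)
      nlinarith [sq_nonneg ((k.1:ℝ)), sq_abs ((k.2:ℝ))]
  calc (1:ℝ) = Real.sqrt 1 := by simp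
  _ ≤ znorm k := Real.sqrt_le_sqrt h

lemma znorm_pos {k : ℤ × ℤ} (hk : k ≠ 0) : 0 < znorm k :=
  lt_of_lt_of_le one_pos (one_le_znorm hk)

lemma znorm_eq_abs (k : ℤ × ℤ) : znorm k = ‖(⟨(k.1:ℝ), (k.2:ℝ)⟩ : ℂ)‖ := by
  rw [znorm, Complex.norm_def, Complex.normSq_mk]; ring_nf

lemma znorm_add_le (j k : ℤ × ℤ) : znorm (j + k) ≤ znorm j + znorm k := by
  rw [znorm_eq_abs, znorm_eq_abs, znorm_eq_abs]
  have h : (⟨((j+k).1:ℝ), ((j+k).2:ℝ)⟩ : ℂ) = ⟨(j.1:ℝ), (j.2:ℝ)⟩ + ⟨(k.1:ℝ), (k.2:ℝ)⟩ := by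
    apply Complex.ext <;> simp [Prod.fst_add, Prod.snd_add]
  rw [h]
  exact norm_add_le _ _

lemma abs_perpDot_le (j k : ℤ × ℤ) : |perpDot j k| ≤ znorm j * znorm k := by
  rw [← Real.sqrt_sq_eq_abs, znorm, znorm, ← Real.sqrt_mul (by positivity)]
  apply Real.sqrt_le_sqrt
  simp only [perpDot]
  nlinarith [sq_nonneg ((j.1:ℝ)*(k.1:ℝ) + (j.2:ℝ)*(k.2:ℝ))]

lemma rpow_subadd {x y s : ℝ} (hx : 0 ≤ x) (hy : 0 ≤ y) (hs0 : 0 ≤ s) (hs1 : s ≤ 1) :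
    (x + y) ^ s ≤ x ^ s + y ^ s := by
  have h := NNReal.rpow_add_le_add_rpow x.toNNReal y.toNNReal hs0 hs1
  have h2 := NNReal.coe_le_coe.2 h
  push_cast at h2
  rwa [Real.coe_toNNReal _ hx, Real.coe_toNNReal _ hy] at h2

lemma enn_cs (b h : ℤ × ℤ → ℝ≥0∞) :
    ∑' k, b k * h k ≤ (∑' k, b k ^ (2:ℝ)) ^ (1/2:ℝ) * (∑' k, h k ^ (2:ℝ)) ^ (1/2:ℝ) := by
  have h2 : (2:ℝ).HolderConjugate 2 := Real.HolderConjugate.two_two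
  have := ENNReal.lintegral_mul_le_Lp_mul_Lq (Measure.count : Measure (ℤ × ℤ)) h2
    (measurable_of_countable b).aemeasurable (measurable_of_countable h).aemeasurable
  simpa [lintegral_count] using this

lemma enn_young (a b h : ℤ × ℤ → ℝ≥0∞) :
    ∑' p : (ℤ × ℤ) × (ℤ × ℤ), a p.1 * b p.2 * h (p.1 + p.2) ≤
      (∑' j, a j) * ((∑' k, b k ^ (2:ℝ)) ^ (1/2:ℝ) * (∑' k, h k ^ (2:ℝ)) ^ (1/2:ℝ)) := by
  rw [ENNReal.tsum_prod']
  calc ∑' j, ∑' k, a j * b k * h (j + k)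
      = ∑' j, a j * ∑' k, b k * h (j + k) := by
        refine tsum_congr fun j => ?_
        rw [← ENNReal.tsum_mul_left]
        exact tsum_congr fun k => by ring
    _ ≤ ∑' j, a j * ((∑' k, b k ^ (2:ℝ)) ^ (1/2:ℝ) * (∑' k, h k ^ (2:ℝ)) ^ (1/2:ℝ)) := by
        refine ENNReal.tsum_le_tsum fun j => ?_
        refine mul_le_mul_right ?_ _
        refine (enn_cs b (fun k => h (j + k))).trans ?_
        have : ∑' k, h (j + k) ^ (2:ℝ) = ∑' k, h k ^ (2:ℝ) :=
          (Equiv.addLeft j).tsum_eq (fun m => h m ^ (2:ℝ))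
        rw [this]
    _ = _ := ENNReal.tsum_mul_right

lemma enn_tsum_nnnorm_le {ι : Type*} (T : ι → ℂ) :
    (‖∑' i, T i‖₊ : ℝ≥0∞) ≤ ∑' i, (‖T i‖₊ : ℝ≥0∞) := by
  by_cases hsum : Summable fun i => ‖T i‖₊
  · rw [← ENNReal.coe_tsum hsum]
    exact ENNReal.coe_le_coe.2 (nnnorm_tsum_le hsum)
  · have : (∑' i, (‖T i‖₊ : ℝ≥0∞)) = ⊤ := by
      by_contra h
      exact hsum (ENNReal.tsum_coe_ne_top_iff_summable.1 h)
    rw [this]; exact le_top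

/-- `ℝ≥0∞`-valued euclidean norm of a lattice point. -/
def nn (q : ℤ × ℤ) : ℝ≥0∞ := ENNReal.ofReal (znorm q)

/-- `ℝ≥0∞`-valued modulus of a Fourier coefficient. -/
def gg (f : ℤ × ℤ → ℂ) (q : ℤ × ℤ) : ℝ≥0∞ := (‖f q‖₊ : ℝ≥0∞)

lemma one_le_nn {k : ℤ × ℤ} (hk : k ≠ 0) : 1 ≤ nn k := by
  rw [nn, show (1:ℝ≥0∞) = ENNReal.ofReal 1 by simp]
  exact ENNReal.ofReal_le_ofReal (one_le_znorm hk)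

lemma nn_ne_top (k : ℤ × ℤ) : nn k ≠ ⊤ := ENNReal.ofReal_ne_top

lemma nn_add_le (j k : ℤ × ℤ) : nn (j + k) ≤ nn j + nn k := by
  rw [nn, nn, nn, ← ENNReal.ofReal_add (znorm_nonneg _) (znorm_nonneg _)]
  exact ENNReal.ofReal_le_ofReal (znorm_add_le j k)

lemma abs_le_znorm_fst (p : ℤ × ℤ) : |(p.1:ℝ)| ≤ znorm p := by
  rw [znorm, ← Real.sqrt_sq_eq_abs]
  exact Real.sqrt_le_sqrt (by nlinarith [sq_nonneg ((p.2:ℝ))])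

lemma abs_le_znorm_snd (p : ℤ × ℤ) : |(p.2:ℝ)| ≤ znorm p := by
  rw [znorm, ← Real.sqrt_sq_eq_abs]
  exact Real.sqrt_le_sqrt (by nlinarith [sq_nonneg ((p.1:ℝ))])

lemma lattice_sum_lt_top {r : ℝ} (hr : 2 < r) :
    (∑' p : ℤ × ℤ, if p = 0 then 0 else nn p ^ (-r)) < ⊤ := by
  have hsum : Summable fun x : Fin 2 → ℤ => ‖x‖ ^ (-r) :=
    EisensteinSeries.summable_one_div_norm_rpow hr
  have hsum2 : Summable fun p : ℤ × ℤ => ‖(finTwoArrowEquiv ℤ).symm p‖ ^ (-r) :=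
    (finTwoArrowEquiv ℤ).symm.summable_iff.2 hsum
  have hle : ∀ p : ℤ × ℤ, (if p = 0 then 0 else nn p ^ (-r)) ≤
      ENNReal.ofReal (‖(finTwoArrowEquiv ℤ).symm p‖ ^ (-r)) := by
    intro p
    split
    · exact zero_le
    next hp =>
      have hmax : ‖(finTwoArrowEquiv ℤ).symm p‖ = max (|(p.1:ℝ)|) (|(p.2:ℝ)|) := by
        rw [EisensteinSeries.norm_eq_max_natAbs]
        simp [finTwoArrowEquiv, Nat.cast_natAbs]
      have h1 : ‖(finTwoArrowEquiv ℤ).symm p‖ ≤ znorm p := by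
        rw [hmax]
        exact max_le (abs_le_znorm_fst p) (abs_le_znorm_snd p)
      have h0 : (0:ℝ) < ‖(finTwoArrowEquiv ℤ).symm p‖ := by
        rw [norm_pos_iff]
        intro h
        apply hp
        have := congrArg (finTwoArrowEquiv ℤ) h
        have h' : p = (0, 0) := by simpa using this
        exact h'
      have hzp : (0:ℝ) < znorm p := lt_of_lt_of_le h0 h1
      rw [nn, ENNReal.ofReal_rpow_of_pos hzp]
      exact ENNReal.ofReal_le_ofReal
        (Real.rpow_le_rpow_of_nonpos h0 h1 (by linarith))
  calc _ ≤ ∑' p : ℤ × ℤ, ENNReal.ofReal (‖(finTwoArrowEquiv ℤ).symm p‖ ^ (-r)) :=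
        ENNReal.tsum_le_tsum hle
    _ = ENNReal.ofReal (∑' p : ℤ × ℤ, ‖(finTwoArrowEquiv ℤ).symm p‖ ^ (-r)) :=
        (ENNReal.ofReal_tsum_of_nonneg (fun p => Real.rpow_nonneg (norm_nonneg _) _) hsum2).symm
    _ < ⊤ := ENNReal.ofReal_lt_top

lemma comb_abstract {t u v : ℝ} (ht0 : 0 ≤ t) (ht1 : t ≤ 1) (hu : 1 ≤ u) (hv : 1 + t ≤ v)
    (x y z gx gy gz : ℝ≥0∞) (hy : 1 ≤ y) (hz : 1 ≤ z)
    (hyt : y ≠ ⊤) (hzt : z ≠ ⊤) (hzxy : z ≤ x + y) :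
    y * z ^ (v + t) * gx * gy * gz ≤
      x ^ t * gx * (y ^ u * gy) * (z ^ v * gz) + gx * (y ^ v * gy) * (z ^ v * gz) := by
  have hz0 : z ≠ 0 := fun h => by simp [h] at hz
  have hy0 : y ≠ 0 := fun h => by simp [h] at hy
  have h1 : z ^ (v + t) = z ^ v * z ^ t := ENNReal.rpow_add v t hz0 hzt
  have h2 : z ^ t ≤ x ^ t + y ^ t :=
    (ENNReal.rpow_le_rpow hzxy ht0).trans (ENNReal.rpow_add_le_add_rpow x y ht0 ht1)
  have hyu : y ≤ y ^ u := by
    conv_lhs => rw [← ENNReal.rpow_one y]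
    exact ENNReal.rpow_le_rpow_of_exponent_le hy hu
  have hyv : y ^ t * y ≤ y ^ v := by
    rw [show y ^ t * y = y ^ (t + 1) by
      rw [ENNReal.rpow_add t 1 hy0 hyt, ENNReal.rpow_one]]
    exact ENNReal.rpow_le_rpow_of_exponent_le hy (by linarith)
  calc y * z ^ (v + t) * gx * gy * gz
      = z ^ t * (y * gy * (gx * (z ^ v * gz))) := by rw [h1]; ring
    _ ≤ (x ^ t + y ^ t) * (y * gy * (gx * (z ^ v * gz))) := mul_le_mul_left h2 _
    _ = x ^ t * gx * (y * gy) * (z ^ v * gz) + gx * (y ^ t * y * gy) * (z ^ v * gz) := by ring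
    _ ≤ x ^ t * gx * (y ^ u * gy) * (z ^ v * gz) + gx * (y ^ v * gy) * (z ^ v * gz) :=
        add_le_add (mul_le_mul_left (mul_le_mul_right (mul_le_mul_left hyu _) _) _)
          (mul_le_mul_left (mul_le_mul_right (mul_le_mul_left hyv _) _) _)

lemma gnorm_zero_eq (s ρ : ℝ) (f : ℤ × ℤ → ℂ) (hf : f 0 = 0) :
    gnorm s ρ 0 f = (∑' k, (nn k ^ ρ * gg f k) ^ (2:ℝ)) ^ (1/2:ℝ) := by
  unfold gnorm
  congr 1
  refine tsum_congr fun k => ?_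
  by_cases hk : k = 0
  · subst hk
    rw [if_pos rfl]
    simp [gg, hf]
  · rw [if_neg hk]
    have hzk := znorm_pos hk
    rw [nn, gg, ENNReal.mul_rpow_of_nonneg _ _ (by norm_num : (0:ℝ) ≤ 2)]
    rw [← ENNReal.rpow_mul, ENNReal.ofReal_rpow_of_pos hzk]
    rw [ENNReal.rpow_two, ← enorm_eq_nnnorm, ← ofReal_norm, ← ENNReal.ofReal_pow (norm_nonneg _)]
    rw [← ENNReal.ofReal_mul (Real.rpow_nonneg hzk.le _)]
    norm_num [Real.exp_zero, mul_comm ρ 2]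

lemma tsum_weight_le (f : ℤ × ℤ → ℂ) (hf0 : f 0 = 0) (a ρ : ℝ) :
    ∑' j, nn j ^ (ρ - a) * gg f j ≤
      (∑' p : ℤ × ℤ, if p = 0 then 0 else nn p ^ (-(2*a))) ^ (1/2:ℝ) *
        (∑' k, (nn k ^ ρ * gg f k) ^ (2:ℝ)) ^ (1/2:ℝ) := by
  have hgg0 : gg f 0 = 0 := by simp [gg, hf0]
  calc ∑' j, nn j ^ (ρ - a) * gg f j
      ≤ ∑' j, (if j = 0 then 0 else nn j ^ (-a)) * (nn j ^ ρ * gg f j) := by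
        refine ENNReal.tsum_le_tsum fun j => ?_
        by_cases hj : j = 0
        · subst hj; rw [hgg0, mul_zero]; exact zero_le
        · rw [if_neg hj, ← mul_assoc, ← ENNReal.rpow_add _ _
            (ne_of_gt (lt_of_lt_of_le one_pos (one_le_nn hj))) (nn_ne_top j)]
          rw [show -a + ρ = ρ - a by ring]
    _ ≤ (∑' j, (if j = 0 then 0 else nn j ^ (-a)) ^ (2:ℝ)) ^ (1/2:ℝ) *
        (∑' k, (nn k ^ ρ * gg f k) ^ (2:ℝ)) ^ (1/2:ℝ) := enn_cs _ _
    _ ≤ _ := by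
        refine mul_le_mul_left (ENNReal.rpow_le_rpow ?_ (by norm_num)) _
        refine ENNReal.tsum_le_tsum fun j => ?_
        by_cases hj : j = 0
        · simp [hj, ENNReal.zero_rpow_of_pos]
        · rw [if_neg hj, if_neg hj, ← ENNReal.rpow_mul, show -a * 2 = -(2*a) by ring]

lemma pointwise_bound (s σ c : ℝ) (hs0 : 0 < s) (hs1 : s ≤ 1) (hc : 0 ≤ c) (f : ℤ × ℤ → ℂ)
    (j k : ℤ × ℤ) (h1 : j ≠ 0) (h2 : k ≠ 0) (h3 : j + k ≠ 0) :
    (‖((Real.exp (c * (znorm (j + k) ^ s - znorm j ^ s - znorm k ^ s)) : ℝ) : ℂ)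
        * ((perpDot j k / znorm j : ℝ) : ℂ) * f j * f k
        * ((znorm (j + k) ^ (2 * σ * s) : ℝ) : ℂ)
        * (starRingEnd ℂ) (f (j + k))‖₊ : ℝ≥0∞)
      ≤ nn k * nn (j + k) ^ (2 * σ * s) * gg f j * gg f k * gg f (j + k) := by
  have hE : (‖((Real.exp (c * (znorm (j + k) ^ s - znorm j ^ s - znorm k ^ s)) : ℝ) : ℂ)‖₊ : ℝ≥0∞)
      ≤ 1 := by
    rw [← enorm_eq_nnnorm, ← ofReal_norm]
    refine ENNReal.ofReal_le_one.2 ?_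
    rw [Complex.norm_real, Real.norm_eq_abs, Real.abs_exp]
    refine Real.exp_le_one_iff.2 ?_
    have hsub : znorm (j + k) ^ s ≤ znorm j ^ s + znorm k ^ s :=
      (Real.rpow_le_rpow (znorm_nonneg _) (znorm_add_le j k) hs0.le).trans
        (rpow_subadd (znorm_nonneg _) (znorm_nonneg _) hs0.le hs1)
    exact mul_nonpos_of_nonneg_of_nonpos hc (by linarith)
  have hD : (‖((perpDot j k / znorm j : ℝ) : ℂ)‖₊ : ℝ≥0∞) ≤ nn k := by
    rw [← enorm_eq_nnnorm, ← ofReal_norm, nn]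
    refine ENNReal.ofReal_le_ofReal ?_
    rw [Complex.norm_real, Real.norm_eq_abs, abs_div, abs_of_pos (znorm_pos h1),
      div_le_iff₀ (znorm_pos h1)]
    calc |perpDot j k| ≤ znorm j * znorm k := abs_perpDot_le j k
      _ = znorm k * znorm j := by ring
  have hW : (‖((znorm (j + k) ^ (2 * σ * s) : ℝ) : ℂ)‖₊ : ℝ≥0∞) = nn (j + k) ^ (2 * σ * s) := by
    rw [← enorm_eq_nnnorm, ← ofReal_norm, Complex.norm_real, Real.norm_eq_abs,
      abs_of_nonneg (Real.rpow_nonneg (znorm_nonneg _) _), nn,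
      ENNReal.ofReal_rpow_of_pos (znorm_pos h3)]
  have hC : (‖(starRingEnd ℂ) (f (j + k))‖₊ : ℝ≥0∞) = gg f (j + k) := by
    rw [gg, RCLike.nnnorm_conj]
  calc (‖((Real.exp (c * (znorm (j + k) ^ s - znorm j ^ s - znorm k ^ s)) : ℝ) : ℂ)
        * ((perpDot j k / znorm j : ℝ) : ℂ) * f j * f k
        * ((znorm (j + k) ^ (2 * σ * s) : ℝ) : ℂ)
        * (starRingEnd ℂ) (f (j + k))‖₊ : ℝ≥0∞)
      = (‖((Real.exp (c * (znorm (j + k) ^ s - znorm j ^ s - znorm k ^ s)) : ℝ) : ℂ)‖₊ : ℝ≥0∞)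
        * ‖((perpDot j k / znorm j : ℝ) : ℂ)‖₊ * gg f j * gg f k
        * ‖((znorm (j + k) ^ (2 * σ * s) : ℝ) : ℂ)‖₊ * gg f (j + k) := by
        simp only [nnnorm_mul, ENNReal.coe_mul, gg, hC]
    _ ≤ 1 * nn k * gg f j * gg f k * (nn (j + k) ^ (2 * σ * s)) * gg f (j + k) := by
        rw [hW]
        exact mul_le_mul_left (mul_le_mul_left (mul_le_mul_left (mul_le_mul_left
          (mul_le_mul' hE hD) _) _) _) _
    _ = nn k * nn (j + k) ^ (2 * σ * s) * gg f j * gg f k * gg f (j + k) := by ring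

end aux

/-- **Weighted trilinear estimate.**
For `s ∈ (1/2,1]`, `σ ∈ (1/s,2)` there is `C > 0` (depending only on `s, σ`) such that for
every `c ≥ 0` and `f : ℤ² → ℂ` with `f(0) = 0` and `X_{σ+1} < ∞`,
`|∑_{j,k≠0, j+k≠0} e^{c(|j+k|^s−|j|^s−|k|^s)} ((j^⊥·k)/|j|) f(j) f(k) |j+k|^{2σs} conj (f(j+k))|
  ≤ C X_σ X_{σ+1}²`, where `X_ρ = (∑_{k≠0} |k|^{2ρs} |f(k)|²)^{1/2} = ‖f‖_{ρs,0}`. -/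
theorem weighted_trilinear_estimate
    (s σ : ℝ) (hs : s ∈ Set.Ioc (1/2 : ℝ) 1) (hσ : σ ∈ Set.Ioo (1/s) 2) :
    ∃ C : ℝ, 0 < C ∧
      ∀ (c : ℝ), 0 ≤ c →
      ∀ f : ℤ × ℤ → ℂ, f 0 = 0 → gnorm s ((σ + 1) * s) 0 f < ⊤ →
        (‖∑' p : (ℤ × ℤ) × (ℤ × ℤ),
            if p.1 = 0 ∨ p.2 = 0 ∨ p.1 + p.2 = 0 then 0 else
              ((Real.exp (c * (znorm (p.1 + p.2) ^ s - znorm p.1 ^ s - znorm p.2 ^ s)) : ℝ) : ℂ)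
                * ((perpDot p.1 p.2 / znorm p.1 : ℝ) : ℂ) * f p.1 * f p.2
                * ((znorm (p.1 + p.2) ^ (2 * σ * s) : ℝ) : ℂ)
                * (starRingEnd ℂ) (f (p.1 + p.2))‖₊ : ℝ≥0∞) ≤
          ENNReal.ofReal C * gnorm s (σ * s) 0 f * (gnorm s ((σ + 1) * s) 0 f) ^ 2 := by
  obtain ⟨hs12, hs1⟩ := hs
  obtain ⟨hσl, hσ2⟩ := hσ
  have hs0 : 0 < s := by linarith
  have hσs1 : 1 < σ * s := by
    rw [div_lt_iff₀ hs0] at hσl; linarith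
  have hσ1 : 1 ≤ σ := by
    have h : (1:ℝ) ≤ 1/s := by rw [le_div_iff₀ hs0]; linarith
    linarith
  -- exponents
  set t : ℝ := (σ + 1) * s - 2 * s with hts
  set u : ℝ := σ * s with hus
  set v : ℝ := (σ + 1) * s with hvs
  have ht0 : 0 ≤ t := by rw [hts]; nlinarith
  have ht1 : t ≤ 1 := by rw [hts]; nlinarith
  have hvt : 2 * σ * s = v + t := by rw [hvs, hts]; ring
  have h1tv : 1 + t ≤ v := by rw [hts, hvs]; nlinarith
  -- constants
  set L1 : ℝ≥0∞ := ∑' p : ℤ × ℤ, if p = 0 then 0 else nn p ^ (-(2*(2*s))) with hL1s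
  set L2 : ℝ≥0∞ := ∑' p : ℤ × ℤ, if p = 0 then 0 else nn p ^ (-(2*(σ*s))) with hL2s
  have hL1 : L1 < ⊤ := lattice_sum_lt_top (by linarith)
  have hL2 : L2 < ⊤ := lattice_sum_lt_top (by linarith)
  set K : ℝ≥0∞ := L1 ^ (1/2:ℝ) + L2 ^ (1/2:ℝ) with hKs
  have hK : K ≠ ⊤ := by
    rw [hKs]
    exact ENNReal.add_ne_top.2 ⟨ENNReal.rpow_ne_top_of_nonneg (by norm_num) hL1.ne,
      ENNReal.rpow_ne_top_of_nonneg (by norm_num) hL2.ne⟩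
  refine ⟨K.toReal + 1, by positivity, ?_⟩
  intro c hc f hf0 _hfin
  have hgg0 : gg f 0 = 0 := by simp [gg, hf0]
  rw [gnorm_zero_eq s (σ * s) f hf0, gnorm_zero_eq s ((σ + 1) * s) f hf0]
  set SU : ℝ≥0∞ := ∑' k, (nn k ^ u * gg f k) ^ (2:ℝ) with hSUs
  set SH : ℝ≥0∞ := ∑' k, (nn k ^ v * gg f k) ^ (2:ℝ) with hSHs
  -- pointwise bound
  have step2 : ∀ p : (ℤ × ℤ) × (ℤ × ℤ),
      (‖(if p.1 = 0 ∨ p.2 = 0 ∨ p.1 + p.2 = 0 then 0 else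
          ((Real.exp (c * (znorm (p.1 + p.2) ^ s - znorm p.1 ^ s - znorm p.2 ^ s)) : ℝ) : ℂ)
            * ((perpDot p.1 p.2 / znorm p.1 : ℝ) : ℂ) * f p.1 * f p.2
            * ((znorm (p.1 + p.2) ^ (2 * σ * s) : ℝ) : ℂ)
            * (starRingEnd ℂ) (f (p.1 + p.2)))‖₊ : ℝ≥0∞) ≤
        (nn p.1 ^ t * gg f p.1) * (nn p.2 ^ u * gg f p.2) * (nn (p.1 + p.2) ^ v * gg f (p.1 + p.2))
          + gg f p.1 * (nn p.2 ^ v * gg f p.2) * (nn (p.1 + p.2) ^ v * gg f (p.1 + p.2)) := by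
    intro p
    by_cases hp : p.1 = 0 ∨ p.2 = 0 ∨ p.1 + p.2 = 0
    · rw [if_pos hp]
      simp
    · rw [if_neg hp]
      push_neg at hp
      obtain ⟨h1, h2, h3⟩ := hp
      refine (pointwise_bound s σ c hs0 hs1 hc f p.1 p.2 h1 h2 h3).trans ?_
      rw [hvt]
      exact comb_abstract ht0 ht1 hσs1.le h1tv (nn p.1) (nn p.2) (nn (p.1 + p.2))
        (gg f p.1) (gg f p.2) (gg f (p.1 + p.2)) (one_le_nn h2) (one_le_nn h3)
        (nn_ne_top _) (nn_ne_top _) (nn_add_le p.1 p.2)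
  -- sums of the two weights
  have hA : ∑' j : ℤ × ℤ, nn j ^ t * gg f j ≤ L1 ^ (1/2:ℝ) * SH ^ (1/2:ℝ) := by
    have := tsum_weight_le f hf0 (2*s) v
    rw [show v - 2*s = t by rw [hvs, hts]] at this
    exact this
  have hB : ∑' j : ℤ × ℤ, gg f j ≤ L2 ^ (1/2:ℝ) * SU ^ (1/2:ℝ) := by
    have h := tsum_weight_le f hf0 (σ*s) u
    rw [show u - σ*s = (0:ℝ) by rw [hus]; ring] at h
    calc ∑' j : ℤ × ℤ, gg f j = ∑' j : ℤ × ℤ, nn j ^ (0:ℝ) * gg f j := by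
          refine tsum_congr fun j => ?_
          rw [ENNReal.rpow_zero, one_mul]
      _ ≤ _ := h
  calc (‖∑' p : (ℤ × ℤ) × (ℤ × ℤ),
            if p.1 = 0 ∨ p.2 = 0 ∨ p.1 + p.2 = 0 then 0 else
              ((Real.exp (c * (znorm (p.1 + p.2) ^ s - znorm p.1 ^ s - znorm p.2 ^ s)) : ℝ) : ℂ)
                * ((perpDot p.1 p.2 / znorm p.1 : ℝ) : ℂ) * f p.1 * f p.2
                * ((znorm (p.1 + p.2) ^ (2 * σ * s) : ℝ) : ℂ)
                * (starRingEnd ℂ) (f (p.1 + p.2))‖₊ : ℝ≥0∞)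
      ≤ ∑' p : (ℤ × ℤ) × (ℤ × ℤ), (‖(if p.1 = 0 ∨ p.2 = 0 ∨ p.1 + p.2 = 0 then 0 else
          ((Real.exp (c * (znorm (p.1 + p.2) ^ s - znorm p.1 ^ s - znorm p.2 ^ s)) : ℝ) : ℂ)
            * ((perpDot p.1 p.2 / znorm p.1 : ℝ) : ℂ) * f p.1 * f p.2
            * ((znorm (p.1 + p.2) ^ (2 * σ * s) : ℝ) : ℂ)
            * (starRingEnd ℂ) (f (p.1 + p.2)))‖₊ : ℝ≥0∞) := enn_tsum_nnnorm_le _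
    _ ≤ ∑' p : (ℤ × ℤ) × (ℤ × ℤ),
        ((nn p.1 ^ t * gg f p.1) * (nn p.2 ^ u * gg f p.2)
            * (nn (p.1 + p.2) ^ v * gg f (p.1 + p.2))
          + gg f p.1 * (nn p.2 ^ v * gg f p.2) * (nn (p.1 + p.2) ^ v * gg f (p.1 + p.2))) :=
        ENNReal.tsum_le_tsum step2
    _ = (∑' p : (ℤ × ℤ) × (ℤ × ℤ), (nn p.1 ^ t * gg f p.1) * (nn p.2 ^ u * gg f p.2)
            * (nn (p.1 + p.2) ^ v * gg f (p.1 + p.2)))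
        + ∑' p : (ℤ × ℤ) × (ℤ × ℤ), gg f p.1 * (nn p.2 ^ v * gg f p.2)
            * (nn (p.1 + p.2) ^ v * gg f (p.1 + p.2)) := ENNReal.tsum_add
    _ ≤ (∑' j : ℤ × ℤ, nn j ^ t * gg f j) * (SU ^ (1/2:ℝ) * SH ^ (1/2:ℝ))
        + (∑' j : ℤ × ℤ, gg f j) * (SH ^ (1/2:ℝ) * SH ^ (1/2:ℝ)) :=
        add_le_add (enn_young _ _ _) (enn_young _ _ _)
    _ ≤ (L1 ^ (1/2:ℝ) * SH ^ (1/2:ℝ)) * (SU ^ (1/2:ℝ) * SH ^ (1/2:ℝ))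
        + (L2 ^ (1/2:ℝ) * SU ^ (1/2:ℝ)) * (SH ^ (1/2:ℝ) * SH ^ (1/2:ℝ)) :=
        add_le_add (mul_le_mul_left hA _) (mul_le_mul_left hB _)
    _ = K * (SU ^ (1/2:ℝ) * (SH ^ (1/2:ℝ)) ^ 2) := by rw [hKs]; ring
    _ ≤ ENNReal.ofReal (K.toReal + 1) * (SU ^ (1/2:ℝ) * (SH ^ (1/2:ℝ)) ^ 2) := by
        refine mul_le_mul_left ?_ _
        calc K = ENNReal.ofReal K.toReal := (ENNReal.ofReal_toReal hK).symm
          _ ≤ _ := ENNReal.ofReal_le_ofReal (by linarith)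
    _ = ENNReal.ofReal (K.toReal + 1) * SU ^ (1/2:ℝ) * (SH ^ (1/2:ℝ)) ^ 2 := by ring

end
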